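/- Let R be a commutative ring. The following are equivalent: (1) R is τ_q-coherent, i.e., every τ_q-finitely generated ideal of R is τ_q-finitely presented; (2) the intersection of any two finitely generated ideals of R is τ_q-finitely generated, and for every b ∈ R the annihilator ideal (0 :_R b) = {r ∈ R : rb = 0} is τ_q-finitely generated; (3) for every b ∈ R and every finitely generated ideal I of R, the ideal (I :_R b) = {r ∈ R : rb ∈ I} is τ_q-finitely generated. -/

import Mathlib

open Polynomial TensorProduct

universe u v

/-- An ideal is *semi-regular* if it contains a finitely generated dense subideal
(an ideal is *dense* if its annihilator is zero). -/
def Ideal.IsSemiregular {R : Type*} [CommRing R] (I : Ideal R) : Prop :=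
  ∃ J : Ideal R, J ≤ I ∧ J.FG ∧ Submodule.annihilator J = ⊥

/-- A module is *Q-torsion* if every element is annihilated by some finitely
generated semi-regular ideal. -/
def IsQTorsion (R : Type*) (M : Type*) [CommRing R] [AddCommGroup M] [Module R M] : Prop :=
  ∀ m : M, ∃ I : Ideal R, I.FG ∧ I.IsSemiregular ∧ ∀ a ∈ I, a • m = 0

/-- A module is *τ_q-finitely generated* if it has a finitely generated submodule
with Q-torsion quotient. -/
def IsTauQFG (R : Type u) (M : Type v) [CommRing R] [AddCommGroup M] [Module R M] : Prop :=
  ∃ N : Submodule R M, N.FG ∧ IsQTorsion R (M ⧸ N)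

/-- A module is *τ_q-finitely presented* if it receives a linear map from a finitely
presented module with Q-torsion kernel and cokernel. -/
def IsTauQFP (R : Type u) (M : Type v) [CommRing R] [AddCommGroup M] [Module R M] : Prop :=
  ∃ (N : Type v) (_ : AddCommGroup N) (_ : Module R N) (f : N →ₗ[R] M),
    Module.FinitePresentation R N ∧ IsQTorsion R (LinearMap.ker f) ∧
      IsQTorsion R (M ⧸ LinearMap.range f)

section Aux

open Submodule LinearMap Function

variable {R : Type u} [CommRing R]

/-- Membership in the Gabriel system `Q`. -/
def InQ (R : Type u) [CommRing R] (I : Ideal R) : Prop := I.FG ∧ I.IsSemiregular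

lemma inQ_top : InQ R (⊤ : Ideal R) := by
  have hfg : (⊤ : Ideal R).FG := ⟨{1}, by simp [Ideal.span_singleton_one]⟩
  refine ⟨hfg, ⊤, le_rfl, hfg, ?_⟩
  rw [eq_bot_iff]
  intro r hr
  have := Submodule.mem_annihilator.mp hr 1 Submodule.mem_top
  simpa using this

lemma InQ.mul {I J : Ideal R} (hI : InQ R I) (hJ : InQ R J) : InQ R (I * J) := by
  obtain ⟨hIfg, I', hI'le, hI'fg, hI'ann⟩ := hI
  obtain ⟨hJfg, J', hJ'le, hJ'fg, hJ'ann⟩ := hJ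
  refine ⟨Submodule.FG.mul hIfg hJfg, I' * J', Ideal.mul_mono hI'le hJ'le,
    Submodule.FG.mul hI'fg hJ'fg, ?_⟩
  rw [eq_bot_iff]
  intro r hr
  rw [Submodule.mem_annihilator] at hr
  have h1 : ∀ y ∈ I', r * y = 0 := by
    intro y hy
    have h2 : (r * y) ∈ J'.annihilator := by
      rw [Submodule.mem_annihilator]
      intro z hz
      have := hr (y * z) (Ideal.mul_mem_mul hy hz)
      rw [smul_eq_mul] at this ⊢
      calc r * y * z = r * (y * z) := by ring
        _ = 0 := this
    rw [hJ'ann, Submodule.mem_bot] at h2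
    exact h2
  have : r ∈ I'.annihilator :=
    Submodule.mem_annihilator.mpr (fun y hy => by rw [smul_eq_mul]; exact h1 y hy)
  rw [hI'ann, Submodule.mem_bot] at this
  exact this

lemma inQ_finset_prod {ι : Type*} (s : Finset ι) (f : ι → Ideal R)
    (h : ∀ i ∈ s, InQ R (f i)) : InQ R (∏ i ∈ s, f i) :=
  Finset.prod_induction f _ (fun _ _ ha hb => ha.mul hb)
    (by rw [Ideal.one_eq_top]; exact inQ_top) h

lemma prod_le_of_mem {ι : Type*} {s : Finset ι} {f : ι → Ideal R} {i : ι} (hi : i ∈ s) :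
    (∏ j ∈ s, f j) ≤ f i := by
  classical
  rw [← Finset.mul_prod_erase s f hi]
  exact Ideal.mul_le_left

lemma prod_trick {M : Type v} [AddCommGroup M] [Module R M] (m : M) (N : Submodule R M)
    {I : Ideal R} (hI : InQ R I)
    (h : ∀ a ∈ I, ∃ J : Ideal R, InQ R J ∧ ∀ b ∈ J, (b * a) • m ∈ N) :
    ∃ K : Ideal R, InQ R K ∧ ∀ c ∈ K, c • m ∈ N := by
  classical
  obtain ⟨s, hs⟩ := hI.1
  have key : ∀ a : s, ∃ J : Ideal R, InQ R J ∧ ∀ b ∈ J, (b * (a : R)) • m ∈ N := by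
    rintro ⟨a, ha⟩
    exact h a (by rw [← hs]; exact Submodule.subset_span ha)
  choose J hJ hJ2 using key
  refine ⟨I * ∏ a ∈ s.attach, J a, hI.mul (inQ_finset_prod _ _ fun a _ => hJ a), ?_⟩
  intro c hc
  refine Submodule.mul_induction_on hc ?_ ?_
  · intro x hx y hy
    rw [← hs] at hx
    induction hx using Submodule.span_induction with
    | mem a ha =>
      have hy' : y ∈ J ⟨a, ha⟩ := prod_le_of_mem (Finset.mem_attach s ⟨a, ha⟩) hy
      rw [mul_comm]
      exact hJ2 ⟨a, ha⟩ y hy'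
    | zero => simpa using N.zero_mem
    | add x₁ x₂ hx₁ hx₂ ih₁ ih₂ => rw [add_mul, add_smul]; exact N.add_mem ih₁ ih₂
    | smul r x₁ hx₁ ih => rw [smul_mul_assoc, smul_assoc]; exact N.smul_mem r ih
  · intro x y hx hy
    rw [add_smul]
    exact N.add_mem hx hy

lemma qt_quot_iff {M : Type v} [AddCommGroup M] [Module R M] (N : Submodule R M) :
    IsQTorsion R (M ⧸ N) ↔ ∀ x : M, ∃ I : Ideal R, InQ R I ∧ ∀ a ∈ I, a • x ∈ N := by
  constructor
  · intro h x
    obtain ⟨I, h1, h2, h3⟩ := h (Submodule.Quotient.mk x)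
    refine ⟨I, ⟨h1, h2⟩, fun a ha => ?_⟩
    have := h3 a ha
    rwa [← Submodule.Quotient.mk_smul, Submodule.Quotient.mk_eq_zero] at this
  · intro h m
    obtain ⟨x, rfl⟩ := Submodule.Quotient.mk_surjective N m
    obtain ⟨I, hI, h2⟩ := h x
    exact ⟨I, hI.1, hI.2, fun a ha => by
      rw [← Submodule.Quotient.mk_smul, Submodule.Quotient.mk_eq_zero]; exact h2 a ha⟩

lemma tfg_iff {M : Type v} [AddCommGroup M] [Module R M] :
    IsTauQFG R M ↔ ∃ N : Submodule R M, N.FG ∧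
      ∀ x : M, ∃ I : Ideal R, InQ R I ∧ ∀ a ∈ I, a • x ∈ N :=
  exists_congr fun N => and_congr_right fun _ => qt_quot_iff N

lemma tfg_of_qt {M : Type v} [AddCommGroup M] [Module R M] (h : IsQTorsion R M) :
    IsTauQFG R M := by
  refine tfg_iff.2 ⟨⊥, Submodule.fg_bot, fun x => ?_⟩
  obtain ⟨I, h1, h2, h3⟩ := h x
  exact ⟨I, ⟨h1, h2⟩, fun a ha => by rw [Submodule.mem_bot]; exact h3 a ha⟩

lemma tfg_of_finite {M : Type v} [AddCommGroup M] [Module R M] [Module.Finite R M] :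
    IsTauQFG R M :=
  tfg_iff.2 ⟨⊤, Module.Finite.fg_top, fun _ => ⟨⊤, inQ_top, fun _ _ => Submodule.mem_top⟩⟩

lemma tfg_of_surjective {M : Type v} {M' : Type*} [AddCommGroup M] [Module R M]
    [AddCommGroup M'] [Module R M'] (f : M →ₗ[R] M') (hf : Surjective f)
    (h : IsTauQFG R M) : IsTauQFG R M' := by
  rw [tfg_iff] at h ⊢
  obtain ⟨N₀, hfg, he⟩ := h
  refine ⟨N₀.map f, hfg.map f, fun y => ?_⟩
  obtain ⟨x, rfl⟩ := hf y
  obtain ⟨I, hI, h2⟩ := he x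
  exact ⟨I, hI, fun a ha => by rw [← map_smul]; exact Submodule.mem_map_of_mem (h2 a ha)⟩

/-- Elementwise version of `IsTauQFG` for a submodule. -/
def TFGsub {M : Type v} [AddCommGroup M] [Module R M] (S : Submodule R M) : Prop :=
  ∃ S₀ : Submodule R M, S₀ ≤ S ∧ S₀.FG ∧
    ∀ x ∈ S, ∃ I : Ideal R, InQ R I ∧ ∀ a ∈ I, a • x ∈ S₀

lemma tfgsub_iff {M : Type v} [AddCommGroup M] [Module R M] (S : Submodule R M) :
    TFGsub S ↔ IsTauQFG R ↥S := by
  rw [tfg_iff]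
  constructor
  · rintro ⟨S₀, hle, hfg, he⟩
    refine ⟨S₀.comap S.subtype, ?_, fun x => ?_⟩
    · apply Submodule.fg_of_fg_map_injective S.subtype Subtype.val_injective
      have heq : (S₀.comap S.subtype).map S.subtype = S₀ := by
        rw [Submodule.map_comap_eq, Submodule.range_subtype]
        exact inf_eq_right.mpr hle
      rw [heq]; exact hfg
    · obtain ⟨I, hI, h2⟩ := he x.1 x.2
      exact ⟨I, hI, fun a ha => by
        rw [Submodule.mem_comap]; exact h2 a ha⟩
  · rintro ⟨N₀, hfg, he⟩
    refine ⟨N₀.map S.subtype, Submodule.map_subtype_le S N₀, hfg.map _, fun x hx => ?_⟩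
    obtain ⟨I, hI, h2⟩ := he ⟨x, hx⟩
    exact ⟨I, hI, fun a ha => ⟨a • ⟨x, hx⟩, h2 a ha, rfl⟩⟩

lemma TFGsub.map {M : Type v} {M' : Type*} [AddCommGroup M] [Module R M]
    [AddCommGroup M'] [Module R M'] (f : M →ₗ[R] M') {S : Submodule R M}
    (h : TFGsub S) : TFGsub (S.map f) := by
  obtain ⟨S₀, hle, hfg, he⟩ := h
  refine ⟨S₀.map f, Submodule.map_mono hle, hfg.map f, ?_⟩
  rintro x ⟨y, hy, rfl⟩
  obtain ⟨I, hI, h2⟩ := he y hy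
  exact ⟨I, hI, fun a ha => by rw [← map_smul]; exact Submodule.mem_map_of_mem (h2 a ha)⟩

lemma tfgsub_of_fg {M : Type v} [AddCommGroup M] [Module R M] {S : Submodule R M}
    (h : S.FG) : TFGsub S :=
  ⟨S, le_rfl, h, fun x hx => ⟨⊤, inQ_top, fun a _ => S.smul_mem a hx⟩⟩

lemma tfg_extension {A : Type*} {M : Type v} {B : Type*} [AddCommGroup A] [Module R A]
    [AddCommGroup M] [Module R M] [AddCommGroup B] [Module R B]
    (f : A →ₗ[R] M) (g : M →ₗ[R] B) (hg : Surjective g)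
    (hker : LinearMap.ker g ≤ LinearMap.range f)
    (hA : IsTauQFG R A) (hB : IsTauQFG R B) : IsTauQFG R M := by
  rw [tfg_iff] at hA hB ⊢
  obtain ⟨NA, hNAfg, heA⟩ := hA
  obtain ⟨NB, hNBfg, heB⟩ := hB
  obtain ⟨k, b, hb⟩ := Submodule.fg_iff_exists_fin_generating_family.mp hNBfg
  choose mlift hmlift using fun i => hg (b i)
  set N : Submodule R M := NA.map f ⊔ Submodule.span R (Set.range mlift) with hN
  refine ⟨N, (hNAfg.map f).sup (Submodule.fg_span (Set.finite_range mlift)), fun x => ?_⟩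
  obtain ⟨I, hI, hIe⟩ := heB (g x)
  apply prod_trick x N hI
  intro a ha
  have h1 : g (a • x) ∈ NB := by rw [map_smul]; exact hIe a ha
  have h2 : NB ≤ Submodule.map g (Submodule.span R (Set.range mlift)) := by
    rw [Submodule.map_span, ← Set.range_comp]
    have heq : g ∘ mlift = b := funext hmlift
    rw [heq, hb]
  obtain ⟨y, hy, hgy⟩ := h2 h1
  have h3 : a • x - y ∈ LinearMap.ker g := by
    rw [LinearMap.mem_ker, map_sub, hgy, sub_self]
  obtain ⟨w, hw⟩ := hker h3
  obtain ⟨J, hJ, hJe⟩ := heA w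
  refine ⟨J, hJ, fun c hc => ?_⟩
  have hax : a • x = y + f w := by rw [hw]; abel
  have hcalc : (c * a) • x = c • y + f (c • w) := by
    rw [mul_smul, hax, smul_add, map_smul]
  rw [hcalc]
  have hyN : y ∈ N := (le_sup_right : _ ≤ N) hy
  exact N.add_mem (N.smul_mem c hyN)
    ((le_sup_left : NA.map f ≤ N) (Submodule.mem_map_of_mem (hJe c hc)))

lemma tfgsub_of_dense {M : Type v} [AddCommGroup M] [Module R M] [Module.Finite R M]
    (W : Submodule R M)
    (h : ∀ x : M, ∃ I : Ideal R, InQ R I ∧ ∀ a ∈ I, a • x ∈ W) : TFGsub W := by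
  classical
  obtain ⟨k, mgen, hmgen⟩ :=
    Submodule.fg_iff_exists_fin_generating_family.mp (Module.Finite.fg_top (R := R) (M := M))
  choose I hI hIe using fun i : Fin k => h (mgen i)
  set S₀ : Submodule R M :=
    ⨆ i : Fin k, Submodule.map (LinearMap.toSpanSingleton R M (mgen i)) (I i) with hS₀
  have hS₀le : S₀ ≤ W := by
    refine iSup_le fun i => ?_
    rintro x ⟨a, ha, rfl⟩
    simpa using hIe i a ha
  have hS₀fg : S₀.FG := Submodule.fg_iSup _ fun i => Submodule.FG.map _ (hI i).1
  have main : ∀ x : M, ∃ K : Ideal R, InQ R K ∧ ∀ c ∈ K, c • x ∈ S₀ := by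
    intro x
    have hx : x ∈ Submodule.span R (Set.range mgen) := hmgen ▸ Submodule.mem_top
    induction hx using Submodule.span_induction with
    | mem y hys =>
      obtain ⟨i, rfl⟩ := hys
      exact ⟨I i, hI i, fun c hc =>
        Submodule.mem_iSup_of_mem i ⟨c, hc, by simp⟩⟩
    | zero => exact ⟨⊤, inQ_top, by simp⟩
    | add y z hy hz ihy ihz =>
      obtain ⟨K1, hK1, h1⟩ := ihy
      obtain ⟨K2, hK2, h2⟩ := ihz
      refine ⟨K1 * K2, hK1.mul hK2, fun c hc => ?_⟩
      rw [smul_add]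
      exact S₀.add_mem (h1 c (Ideal.mul_le_left hc)) (h2 c (Ideal.mul_le_right hc))
    | smul r y hy ih =>
      obtain ⟨K, hK, h1⟩ := ih
      exact ⟨K, hK, fun c hc => by rw [smul_comm]; exact S₀.smul_mem r (h1 c hc)⟩
  exact ⟨S₀, hS₀le, hS₀fg, fun x _ => main x⟩

lemma tfgsub_ker_of_fp {M : Type*} {P : Type*} [AddCommGroup M] [Module R M]
    [AddCommGroup P] [Module R P]
    (h : M →ₗ[R] P) (hs : Surjective h) (hfp : Module.FinitePresentation R P)
    (hM : IsTauQFG R M) : TFGsub (LinearMap.ker h) := by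
  classical
  obtain ⟨s, hsspan, hskerfg⟩ := hfp
  set q : (s →₀ R) →ₗ[R] P := Finsupp.linearCombination R Subtype.val with hq
  have hqsurj : Surjective q := LinearMap.range_eq_top.mp
    (by rw [hq, Finsupp.range_linearCombination, Subtype.range_val, ← hsspan])
  obtain ⟨σ, hσ⟩ := Module.projective_lifting_property h q hs
  obtain ⟨D₀, hD₀fg, heD⟩ := tfg_iff.mp hM
  obtain ⟨k, d, hd⟩ := Submodule.fg_iff_exists_fin_generating_family.mp hD₀fg
  choose y hy using fun i : Fin k => hqsurj (h (d i))
  set c : Fin k → M := fun i => d i - σ (y i) with hc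
  set E₀ : Submodule R M := Submodule.span R (Set.range c) ⊔ (LinearMap.ker q).map σ with hE₀
  have hcker : Submodule.span R (Set.range c) ≤ LinearMap.ker h := by
    rw [Submodule.span_le]
    rintro _ ⟨i, rfl⟩
    rw [SetLike.mem_coe, LinearMap.mem_ker, hc, map_sub]
    have : h (σ (y i)) = q (y i) := by rw [← hσ]; rfl
    rw [this, hy, sub_self]
  have hmapker : (LinearMap.ker q).map σ ≤ LinearMap.ker h := by
    rintro _ ⟨w, hw, rfl⟩
    rw [LinearMap.mem_ker]
    have : h (σ w) = q w := by rw [← hσ]; rfl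
    rw [this]
    exact hw
  have hE₀le : E₀ ≤ LinearMap.ker h := sup_le hcker hmapker
  have hE₀fg : E₀.FG :=
    (Submodule.fg_span (Set.finite_range c)).sup (hskerfg.map σ)
  refine ⟨E₀, hE₀le, hE₀fg, fun x hx => ?_⟩
  obtain ⟨Iq, hIq, hIe⟩ := heD x
  refine ⟨Iq, hIq, fun a ha => ?_⟩
  have hz : a • x ∈ D₀ := hIe a ha
  have hz2 : h (a • x) ∈ (⊥ : Submodule R P) := by
    rw [map_smul]
    rw [LinearMap.mem_ker] at hx
    rw [hx, smul_zero]
    exact Submodule.zero_mem _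
  have hD₀le : D₀ ≤ Submodule.span R (Set.range c) ⊔ LinearMap.range σ := by
    rw [← hd, Submodule.span_le]
    rintro _ ⟨i, rfl⟩
    have hdi : d i = c i + σ (y i) := by
      show d i = (d i - σ (y i)) + σ (y i); abel
    rw [SetLike.mem_coe, hdi]
    exact Submodule.add_mem _
      (Submodule.mem_sup_left (Submodule.subset_span ⟨i, rfl⟩))
      (Submodule.mem_sup_right ⟨y i, rfl⟩)
  obtain ⟨u, hu, v, hv, huv⟩ := Submodule.mem_sup.1 (hD₀le hz)
  obtain ⟨w, rfl⟩ := hv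
  have hqw : w ∈ LinearMap.ker q := by
    have h1 : h (σ w) = q w := by rw [← hσ]; rfl
    have h2 : h u = 0 := hcker hu
    have h3 : h (a • x) = 0 := by rw [map_smul, LinearMap.mem_ker.mp hx, smul_zero]
    have h4 : σ w = a • x - u := by rw [← huv]; abel
    rw [LinearMap.mem_ker, ← h1, h4, map_sub, h2, h3, sub_zero]
  rw [← huv]
  exact E₀.add_mem (Submodule.mem_sup_left hu) (Submodule.mem_sup_right ⟨w, hqw, rfl⟩)

lemma tfgsub_ker_of_tfp {M : Type*} {N : Type*} [AddCommGroup M] [Module R M]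
    [AddCommGroup N] [Module R N] [Module.Finite R M]
    (f : M →ₗ[R] N) (hf : Surjective f) (hN : IsTauQFP R N) :
    TFGsub (LinearMap.ker f) := by
  obtain ⟨P, _, _, g, hfp, hkerg, hcokg⟩ := hN
  set W : Submodule R M := (LinearMap.range g).comap f with hW
  have hWdense : ∀ x : M, ∃ I : Ideal R, InQ R I ∧ ∀ a ∈ I, a • x ∈ W := by
    intro x
    obtain ⟨I, h1, h2, h3⟩ := hcokg (Submodule.Quotient.mk (f x))
    refine ⟨I, ⟨h1, h2⟩, fun a ha => ?_⟩
    have := h3 a ha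
    rw [← Submodule.Quotient.mk_smul, Submodule.Quotient.mk_eq_zero] at this
    rw [hW, Submodule.mem_comap, map_smul]
    exact this
  have hWtfg : TFGsub W := tfgsub_of_dense W hWdense
  set h₂ : M × P →ₗ[R] N := f.comp (LinearMap.fst R M P) - g.comp (LinearMap.snd R M P)
    with hh₂
  set D : Submodule R (M × P) := LinearMap.ker h₂ with hD
  have hmemD : ∀ (x : M) (p : P), (x, p) ∈ D ↔ f x = g p := by
    intro x p
    rw [hD, LinearMap.mem_ker, hh₂, LinearMap.sub_apply, LinearMap.comp_apply,
      LinearMap.comp_apply, sub_eq_zero]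
    rfl
  -- α : ker g → D
  set α : ↥(LinearMap.ker g) →ₗ[R] ↥D :=
    LinearMap.codRestrict D ((LinearMap.inr R M P).comp (LinearMap.ker g).subtype)
      (fun p => by
        rw [LinearMap.comp_apply]
        show ((0 : M), (p : P)) ∈ D
        rw [hmemD, map_zero, LinearMap.mem_ker.mp p.2]) with hα
  -- β : D → W
  set β : ↥D →ₗ[R] ↥W :=
    LinearMap.codRestrict W ((LinearMap.fst R M P).comp D.subtype)
      (fun d => by
        obtain ⟨⟨x, p⟩, hd⟩ := d
        rw [hW, Submodule.mem_comap]
        show f x ∈ LinearMap.range g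
        exact ⟨p, ((hmemD x p).mp hd).symm⟩) with hβ
  have hβsurj : Surjective β := by
    rintro ⟨x, hx⟩
    rw [hW, Submodule.mem_comap] at hx
    obtain ⟨p, hp⟩ := hx
    exact ⟨⟨(x, p), (hmemD x p).mpr hp.symm⟩, rfl⟩
  have hkerβ : LinearMap.ker β ≤ LinearMap.range α := by
    rintro ⟨⟨x, p⟩, hd⟩ hk
    have hx0 : x = 0 := congrArg Subtype.val (LinearMap.mem_ker.mp hk)
    refine ⟨⟨p, ?_⟩, ?_⟩
    · rw [LinearMap.mem_ker, ← ((hmemD x p).mp hd), hx0, map_zero]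
    · apply Subtype.ext
      show ((0 : M), (p : P)) = (x, p)
      rw [hx0]
  have hDtfg : IsTauQFG R ↥D :=
    tfg_extension α β hβsurj hkerβ (tfg_of_qt hkerg) ((tfgsub_iff W).mp hWtfg)
  set π : ↥D →ₗ[R] P := (LinearMap.snd R M P).comp D.subtype with hπ
  have hπsurj : Surjective π := by
    intro p
    obtain ⟨x, hx⟩ := hf (g p)
    exact ⟨⟨(x, p), (hmemD x p).mpr hx⟩, rfl⟩
  have hkerπ := tfgsub_ker_of_fp π hπsurj hfp hDtfg
  set μ : ↥D →ₗ[R] M := (LinearMap.fst R M P).comp D.subtype with hμ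
  have hmap : (LinearMap.ker π).map μ = LinearMap.ker f := by
    ext x
    constructor
    · rintro ⟨⟨⟨x', p⟩, hd⟩, hk, rfl⟩
      have hp0 : p = 0 := hk
      show f x' = 0
      rw [(hmemD x' p).mp hd, hp0, map_zero]
    · intro hx
      refine ⟨⟨(x, 0), (hmemD x 0).mpr (by rw [map_zero]; exact hx)⟩, ?_, rfl⟩
      rfl
  exact hmap ▸ hkerπ.map μ

lemma tfp_of {M : Type u} [AddCommGroup M] [Module R M] {n : ℕ}
    (φ : (Fin n → R) →ₗ[R] M) (hker : TFGsub (LinearMap.ker φ))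
    (hcok : ∀ x : M, ∃ I : Ideal R, InQ R I ∧ ∀ a ∈ I, a • x ∈ LinearMap.range φ) :
    IsTauQFP R M := by
  obtain ⟨K₀, hle, hfg, he⟩ := hker
  refine ⟨(Fin n → R) ⧸ K₀, inferInstance, inferInstance, K₀.liftQ φ hle, ?_, ?_, ?_⟩
  · exact Module.finitePresentation_of_surjective K₀.mkQ (Submodule.mkQ_surjective _)
      (by rw [Submodule.ker_mkQ]; exact hfg)
  · rintro ⟨c, hc⟩
    obtain ⟨y, rfl⟩ := Submodule.Quotient.mk_surjective K₀ c
    have hy : y ∈ LinearMap.ker φ := by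
      rw [LinearMap.mem_ker]
      have := LinearMap.mem_ker.mp hc
      rwa [Submodule.liftQ_apply] at this
    obtain ⟨I, hI, h2⟩ := he y hy
    refine ⟨I, hI.1, hI.2, fun a ha => ?_⟩
    apply Subtype.ext
    show a • (Submodule.Quotient.mk y : (Fin n → R) ⧸ K₀) = 0
    rw [← Submodule.Quotient.mk_smul, Submodule.Quotient.mk_eq_zero]
    exact h2 a ha
  · have hrange : LinearMap.range (K₀.liftQ φ hle) = LinearMap.range φ :=
      Submodule.range_liftQ _ _ _
    rw [hrange, qt_quot_iff]
    intro x
    obtain ⟨I, hI, h2⟩ := hcok x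
    exact ⟨I, hI, h2⟩

/-- Extension by zero in the last coordinate, as a linear map. -/
def snocMap (n : ℕ) : (Fin n → R) →ₗ[R] (Fin (n + 1) → R) where
  toFun x := Fin.snoc x 0
  map_add' x y := by
    funext i
    refine Fin.lastCases ?_ (fun j => ?_) i
    · simp [Fin.snoc_last]
    · simp [Fin.snoc_castSucc]
  map_smul' r x := by
    funext i
    refine Fin.lastCases ?_ (fun j => ?_) i
    · simp [Fin.snoc_last]
    · simp [Fin.snoc_castSucc]

lemma lincomb_snoc {n : ℕ} (v : Fin (n + 1) → R) (x : Fin n → R) :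
    Fintype.linearCombination R v (snocMap n x) =
      Fintype.linearCombination R (v ∘ Fin.castSucc) x := by
  rw [Fintype.linearCombination_apply, Fintype.linearCombination_apply,
    Fin.sum_univ_castSucc]
  simp [snocMap, Fin.snoc_castSucc, Fin.snoc_last]

lemma ker_lincomb_tfgsub
    (h3 : ∀ (b : R) (I : Ideal R), I.FG →
      IsTauQFG R ↥(Submodule.comap (LinearMap.toSpanSingleton R R b) I))
    (n : ℕ) (v : Fin n → R) :
    TFGsub (LinearMap.ker (Fintype.linearCombination R v)) := by
  induction n with
  | zero =>
    apply tfgsub_of_fg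
    have hz : Fintype.linearCombination R v = 0 := by
      apply LinearMap.ext
      intro x
      rw [Fintype.linearCombination_apply]
      simp
    rw [hz, LinearMap.ker_zero]
    exact Module.Finite.fg_top
  | succ n ih =>
    set v' : Fin n → R := v ∘ Fin.castSucc with hv'
    set b : R := v (Fin.last n) with hb
    set In : Ideal R := Ideal.span (Set.range v') with hIn
    set lc : (Fin (n + 1) → R) →ₗ[R] R := Fintype.linearCombination R v with hlc
    set lc' : (Fin n → R) →ₗ[R] R := Fintype.linearCombination R v' with hlc'
    set K : Submodule R (Fin (n + 1) → R) := LinearMap.ker lc with hK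
    set C : Ideal R := Submodule.comap (LinearMap.toSpanSingleton R R b) In with hC
    have hsum : ∀ x : Fin (n + 1) → R,
        lc x = (∑ j : Fin n, x (Fin.castSucc j) • v' j) + x (Fin.last n) • b := by
      intro x
      rw [hlc, Fintype.linearCombination_apply, Fin.sum_univ_castSucc]
      rfl
    set α : ↥(LinearMap.ker lc') →ₗ[R] ↥K :=
      LinearMap.codRestrict K ((snocMap n).comp (LinearMap.ker lc').subtype)
        (fun x => by
          show lc (snocMap n x.1) = 0
          rw [hlc, lincomb_snoc]
          exact LinearMap.mem_ker.mp x.2) with hα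
    set β : ↥K →ₗ[R] ↥C :=
      LinearMap.codRestrict C ((LinearMap.proj (Fin.last n)).comp K.subtype)
        (fun x => by
          obtain ⟨x, hx⟩ := x
          show x (Fin.last n) • b ∈ In
          have h0 : lc x = 0 := hx
          rw [hsum] at h0
          have hneg : x (Fin.last n) • b = -(∑ j : Fin n, x (Fin.castSucc j) • v' j) :=
            eq_neg_of_add_eq_zero_right h0
          rw [hneg]
          exact neg_mem (Submodule.sum_mem _ fun j _ =>
            Submodule.smul_mem _ _ (Ideal.subset_span ⟨j, rfl⟩))) with hβ
    have hβsurj : Surjective β := by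
      rintro ⟨r, hr⟩
      have hr' : (r • b : R) ∈ Submodule.span R (Set.range v') := hr
      rw [mem_span_range_iff_exists_fun] at hr'
      obtain ⟨cc, hcc⟩ := hr'
      have hxk : (Fin.snoc (fun j => -(cc j)) r : Fin (n + 1) → R) ∈ K := by
        show lc _ = 0
        rw [hsum]
        simp only [Fin.snoc_castSucc, Fin.snoc_last]
        have hs : (∑ j : Fin n, (-(cc j)) • v' j) = -(r • b) := by
          rw [← hcc, ← Finset.sum_neg_distrib]
          exact Finset.sum_congr rfl fun j _ => by rw [neg_smul]
        rw [hs]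
        exact neg_add_cancel _
      refine ⟨⟨_, hxk⟩, Subtype.ext ?_⟩
      show (Fin.snoc (fun j => -(cc j)) r : Fin (n + 1) → R) (Fin.last n) = r
      rw [Fin.snoc_last]
    have hkerβ : LinearMap.ker β ≤ LinearMap.range α := by
      rintro ⟨x, hx⟩ hk
      have hlast : x (Fin.last n) = 0 := congrArg Subtype.val (LinearMap.mem_ker.mp hk)
      have hx' : (x ∘ Fin.castSucc) ∈ LinearMap.ker lc' := by
        rw [LinearMap.mem_ker, hlc', Fintype.linearCombination_apply]
        have h0 : lc x = 0 := hx
        rw [hsum, hlast, zero_smul, add_zero] at h0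
        exact h0
      refine ⟨⟨_, hx'⟩, Subtype.ext ?_⟩
      show Fin.snoc (x ∘ Fin.castSucc) 0 = x
      funext i
      refine Fin.lastCases ?_ (fun j => ?_) i
      · rw [Fin.snoc_last, hlast]
      · rw [Fin.snoc_castSucc]; rfl
    have hA : IsTauQFG R ↥(LinearMap.ker lc') := (tfgsub_iff _).mp (ih v')
    have hB : IsTauQFG R ↥C := h3 b In (Submodule.fg_span (Set.finite_range v'))
    exact (tfgsub_iff K).mpr (tfg_extension α β hβsurj hkerβ hA hB)

lemma three_to_one
    (h3 : ∀ (b : R) (I : Ideal R), I.FG →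
      IsTauQFG R ↥(Submodule.comap (LinearMap.toSpanSingleton R R b) I)) :
    ∀ I : Ideal R, IsTauQFG R I → IsTauQFP R I := by
  intro I hI
  obtain ⟨I₀, hle, hfg, he⟩ := (tfgsub_iff I).mpr hI
  obtain ⟨n, vv, hvv⟩ := Submodule.fg_iff_exists_fin_generating_family.mp hfg
  set φ' : (Fin n → R) →ₗ[R] R := Fintype.linearCombination R vv with hφ'
  have hrange : LinearMap.range φ' = I₀ := by
    rw [hφ', Fintype.range_linearCombination, hvv]
  have hmem : ∀ x : Fin n → R, φ' x ∈ I := fun x =>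
    hle (hrange ▸ LinearMap.mem_range_self φ' x)
  set φ : (Fin n → R) →ₗ[R] ↥I := LinearMap.codRestrict I φ' hmem with hφ
  have hkerφ : LinearMap.ker φ = LinearMap.ker φ' := LinearMap.ker_codRestrict I φ' hmem
  refine tfp_of φ (by rw [hkerφ, hφ']; exact ker_lincomb_tfgsub h3 n vv) ?_
  intro x
  obtain ⟨J, hJ, h2⟩ := he x.1 x.2
  refine ⟨J, hJ, fun a ha => ?_⟩
  have hax : a • (x : R) ∈ I₀ := h2 a ha
  rw [← hrange] at hax
  obtain ⟨y, hy⟩ := hax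
  refine ⟨y, Subtype.ext ?_⟩
  show φ' y = a • (x : R)
  exact hy

lemma one_to_two_inter (h1 : ∀ I : Ideal R, IsTauQFG R I → IsTauQFP R I)
    (I J : Ideal R) (hIfg : I.FG) (hJfg : J.FG) : IsTauQFG R ↥(I ⊓ J) := by
  haveI : Module.Finite R ↥I := Module.Finite.iff_fg.mpr hIfg
  haveI : Module.Finite R ↥J := Module.Finite.iff_fg.mpr hJfg
  haveI : Module.Finite R ↥(I ⊔ J) := Module.Finite.iff_fg.mpr (Submodule.FG.sup hIfg hJfg)
  set f : ↥I × ↥J →ₗ[R] ↥(I ⊔ J) :=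
    LinearMap.coprod (Submodule.inclusion le_sup_left) (Submodule.inclusion le_sup_right)
    with hf
  have hfsurj : Surjective f := by
    rintro ⟨z, hz⟩
    obtain ⟨x, hx, y, hy, rfl⟩ := Submodule.mem_sup.mp hz
    exact ⟨(⟨x, hx⟩, ⟨y, hy⟩), rfl⟩
  have hker := tfgsub_ker_of_tfp f hfsurj (h1 (I ⊔ J) tfg_of_finite)
  set μ : ↥(LinearMap.ker f) →ₗ[R] ↥(I ⊓ J) :=
    LinearMap.codRestrict (I ⊓ J)
      (I.subtype.comp ((LinearMap.fst R ↥I ↥J).comp (LinearMap.ker f).subtype))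
      (fun d => by
        obtain ⟨⟨x, y⟩, hk⟩ := d
        have hval : (x : R) + (y : R) = 0 := congrArg Subtype.val (LinearMap.mem_ker.mp hk)
        refine Submodule.mem_inf.mpr ⟨x.2, ?_⟩
        have hxy : (x : R) = -(y : R) := eq_neg_of_add_eq_zero_left hval
        rw [show ((I.subtype.comp ((LinearMap.fst R ↥I ↥J).comp
          (LinearMap.ker f).subtype)) ⟨(x, y), hk⟩ : R) = (x : R) from rfl, hxy]
        exact neg_mem y.2) with hμ
  have hμsurj : Surjective μ := by
    rintro ⟨z, hz⟩
    have hz1 : z ∈ I := (Submodule.mem_inf.mp hz).1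
    have hz2 : z ∈ J := (Submodule.mem_inf.mp hz).2
    have hk : ((⟨z, hz1⟩, ⟨-z, neg_mem hz2⟩) : ↥I × ↥J) ∈ LinearMap.ker f := by
      rw [LinearMap.mem_ker]
      apply Subtype.ext
      show z + -z = 0
      exact add_neg_cancel z
    exact ⟨⟨_, hk⟩, rfl⟩
  exact tfg_of_surjective μ hμsurj ((tfgsub_iff _).mp hker)

lemma one_to_two_ann (h1 : ∀ I : Ideal R, IsTauQFG R I → IsTauQFP R I) (b : R) :
    IsTauQFG R ↥(LinearMap.ker (LinearMap.toSpanSingleton R R b)) := by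
  set Jb : Ideal R := Ideal.span {b} with hJb
  haveI : Module.Finite R ↥Jb := Module.Finite.iff_fg.mpr (Submodule.fg_span_singleton b)
  have hmem : ∀ r : R, LinearMap.toSpanSingleton R R b r ∈ Jb := fun r => by
    show r • b ∈ Jb
    exact Submodule.smul_mem _ r (Submodule.mem_span_singleton_self b)
  set f : R →ₗ[R] ↥Jb := LinearMap.codRestrict Jb (LinearMap.toSpanSingleton R R b) hmem
    with hfd
  have hfsurj : Surjective f := by
    rintro ⟨z, hz⟩
    obtain ⟨a, ha⟩ := Submodule.mem_span_singleton.mp hz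
    refine ⟨a, Subtype.ext ?_⟩
    show a • b = z
    exact ha
  have hker := tfgsub_ker_of_tfp f hfsurj (h1 Jb tfg_of_finite)
  rw [hfd, LinearMap.ker_codRestrict] at hker
  exact (tfgsub_iff _).mp hker

lemma two_to_three
    (h2a : ∀ I J : Ideal R, I.FG → J.FG → IsTauQFG R ↥(I ⊓ J))
    (h2b : ∀ b : R, IsTauQFG R ↥(LinearMap.ker (LinearMap.toSpanSingleton R R b)))
    (b : R) (I : Ideal R) (hIfg : I.FG) :
    IsTauQFG R ↥(Submodule.comap (LinearMap.toSpanSingleton R R b) I) := by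
  set T : R →ₗ[R] R := LinearMap.toSpanSingleton R R b with hT
  set C : Ideal R := Submodule.comap T I with hC
  have hkerle : LinearMap.ker T ≤ C := fun r hr => by
    rw [hC, Submodule.mem_comap]
    rw [LinearMap.mem_ker] at hr
    rw [hr]
    exact I.zero_mem
  set α : ↥(LinearMap.ker T) →ₗ[R] ↥C := Submodule.inclusion hkerle with hα
  set B : Ideal R := I ⊓ Ideal.span {b} with hB
  have hmem : ∀ r : ↥C, T.comp C.subtype r ∈ B := fun r => by
    refine Submodule.mem_inf.mpr ⟨r.2, ?_⟩
    show (r : R) • b ∈ Ideal.span {b}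
    exact Submodule.smul_mem _ _ (Submodule.mem_span_singleton_self b)
  set β : ↥C →ₗ[R] ↥B := LinearMap.codRestrict B (T.comp C.subtype) hmem with hβ
  have hβsurj : Surjective β := by
    rintro ⟨z, hz⟩
    obtain ⟨a, ha⟩ := Submodule.mem_span_singleton.mp (Submodule.mem_inf.mp hz).2
    have haC : a ∈ C := by
      rw [hC, Submodule.mem_comap]
      show a • b ∈ I
      rw [ha]
      exact (Submodule.mem_inf.mp hz).1
    refine ⟨⟨a, haC⟩, Subtype.ext ?_⟩
    show a • b = z
    exact ha
  have hkerβ : LinearMap.ker β ≤ LinearMap.range α := by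
    rintro ⟨r, hr⟩ hk
    have hval : T r = 0 := congrArg Subtype.val (LinearMap.mem_ker.mp hk)
    rw [Submodule.range_inclusion]
    exact hval
  exact tfg_extension α β hβsurj hkerβ (h2b b) (h2a I (Ideal.span {b}) hIfg
    (Submodule.fg_span_singleton b))

end Aux

/-- For a commutative ring `R` the following are equivalent:
(1) `R` is τ_q-coherent (every τ_q-finitely generated ideal is τ_q-finitely
presented);
(2) the intersection of any two finitely generated ideals is τ_q-finitely
generated, and the annihilator `(0 :_R b) = {r | r·b = 0}` is τ_q-finitely
generated for every `b ∈ R`;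
(3) `(I :_R b) = {r | r·b ∈ I}` is τ_q-finitely generated for every `b ∈ R` and
every finitely generated ideal `I`. -/
theorem statement17 (R : Type u) [CommRing R] :
    List.TFAE
      [∀ I : Ideal R, IsTauQFG R I → IsTauQFP R I,
      (∀ I J : Ideal R, I.FG → J.FG → IsTauQFG R ↥(I ⊓ J)) ∧
        (∀ b : R, IsTauQFG R ↥(LinearMap.ker (LinearMap.toSpanSingleton R R b))),
      ∀ (b : R) (I : Ideal R), I.FG →
        IsTauQFG R ↥(Submodule.comap (LinearMap.toSpanSingleton R R b) I)] := by
  tfae_have 1 → 2 := fun h1 =>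
    ⟨fun I J hI hJ => one_to_two_inter h1 I J hI hJ, fun b => one_to_two_ann h1 b⟩
  tfae_have 2 → 3 := fun h2 b I hI => two_to_three h2.1 h2.2 b I hI
  tfae_have 3 → 1 := fun h3 => three_to_one h3
  tfae_finish
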